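/- Let Σ be a real symmetric positive definite p×p matrix, M a real p×K matrix of full column rank (K < p), and U a real p×(p−K) matrix with orthonormal columns whose column span equals the null space of M^⊤ (i.e., M^⊤U = 0 and U^⊤U = I_{p−K}). Then M^⊤Σ⁻¹M and U^⊤ΣU are invertible and I_p − M(M^⊤Σ⁻¹M)⁻¹M^⊤Σ⁻¹ = Σ U (U^⊤ Σ U)⁻¹ U^⊤. -/

import Mathlib

open Matrix

lemma aux_posdef {n m : Type*} [Fintype n] [Fintype m] [DecidableEq n] [DecidableEq m]
    {A : Matrix n n ℝ} (hA : A.PosDef) {B : Matrix n m ℝ}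
    (hB : Function.Injective B.mulVec) : (Bᵀ * A * B).PosDef := by
  constructor
  · have h := Matrix.isHermitian_conjTranspose_mul_mul B hA.1
    simpa [Matrix.conjTranspose_eq_transpose_of_trivial] using h
  · have h := (Matrix.PosDef.conjTranspose_mul_mul_same hA hB).2
    rw [Matrix.conjTranspose_eq_transpose_of_trivial] at h
    exact h

/-- Projection identity: for `Σ` symmetric positive definite, `M` of full
column rank, and `U` an orthonormal basis of the null space of `Mᵀ`,
`MᵀΣ⁻¹M` and `UᵀΣU` are invertible and
`I − M(MᵀΣ⁻¹M)⁻¹MᵀΣ⁻¹ = Σ U (UᵀΣU)⁻¹ Uᵀ`. -/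
theorem stmt_13 (p K : ℕ) (hK : 0 < K) (hKp : K < p)
    (Sg : Matrix (Fin p) (Fin p) ℝ) (hSg : Sg.PosDef)
    (M : Matrix (Fin p) (Fin K) ℝ) (hMrank : M.rank = K)
    (U : Matrix (Fin p) (Fin (p - K)) ℝ)
    (hMU : Mᵀ * U = 0) (hUU : Uᵀ * U = 1) :
    IsUnit (Mᵀ * Sg⁻¹ * M) ∧ IsUnit (Uᵀ * Sg * U) ∧
      (1 : Matrix (Fin p) (Fin p) ℝ) - M * (Mᵀ * Sg⁻¹ * M)⁻¹ * Mᵀ * Sg⁻¹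
        = Sg * U * (Uᵀ * Sg * U)⁻¹ * Uᵀ := by
  -- M has injective mulVec
  have hMinj : Function.Injective M.mulVec := by
    have hrn := LinearMap.finrank_range_add_finrank_ker M.mulVecLin
    rw [Module.finrank_fintype_fun_eq_card, Fintype.card_fin] at hrn
    have hr : Module.finrank ℝ (LinearMap.range M.mulVecLin) = K := hMrank
    have hker : LinearMap.ker M.mulVecLin = ⊥ :=
      Submodule.finrank_eq_zero.mp (by omega)
    have := LinearMap.ker_eq_bot.mp hker
    exact this
  -- U has injective mulVec
  have hUinj : Function.Injective U.mulVec := by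
    intro x y hxy
    have : Uᵀ *ᵥ (U *ᵥ x) = Uᵀ *ᵥ (U *ᵥ y) := by rw [hxy]
    simpa [Matrix.mulVec_mulVec, hUU] using this
  -- positive definiteness of the two Gram matrices
  have hX : (Mᵀ * Sg⁻¹ * M).PosDef := aux_posdef hSg.inv hMinj
  have hY : (Uᵀ * Sg * U).PosDef := aux_posdef hSg hUinj
  have hXu : IsUnit (Mᵀ * Sg⁻¹ * M) :=
    (Matrix.isUnit_iff_isUnit_det _).mpr hX.det_pos.ne'.isUnit
  have hYu : IsUnit (Uᵀ * Sg * U) :=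
    (Matrix.isUnit_iff_isUnit_det _).mpr hY.det_pos.ne'.isUnit
  refine ⟨hXu, hYu, ?_⟩
  set X : Matrix (Fin K) (Fin K) ℝ := Mᵀ * Sg⁻¹ * M with hXdef
  set Y : Matrix (Fin (p - K)) (Fin (p - K)) ℝ := Uᵀ * Sg * U with hYdef
  have hSgdet : IsUnit Sg.det := hSg.det_pos.ne'.isUnit
  have hSi : Sg⁻¹ * Sg = 1 := Matrix.nonsing_inv_mul _ hSgdet
  have hXi : X⁻¹ * X = 1 := Matrix.nonsing_inv_mul _ hX.det_pos.ne'.isUnit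
  have hYi : Y⁻¹ * Y = 1 := Matrix.nonsing_inv_mul _ hY.det_pos.ne'.isUnit
  have hXi' : X⁻¹ * (Mᵀ * (Sg⁻¹ * M)) = 1 := by
    rw [show Mᵀ * (Sg⁻¹ * M) = X by rw [hXdef, Matrix.mul_assoc]]; exact hXi
  have hYi' : Y⁻¹ * (Uᵀ * (Sg * U)) = 1 := by
    rw [show Uᵀ * (Sg * U) = Y by rw [hYdef, Matrix.mul_assoc]]; exact hYi
  have hUM : Uᵀ * M = 0 := by
    have := congrArg Matrix.transpose hMU
    simpa using this
  -- the combined matrix and its left/right inverse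
  set C : Matrix (Fin p) (Fin K ⊕ Fin (p - K)) ℝ := fromCols M (Sg * U) with hC
  set L : Matrix (Fin K ⊕ Fin (p - K)) (Fin p) ℝ :=
    fromBlocks X⁻¹ 0 0 Y⁻¹ * fromRows (Mᵀ * Sg⁻¹) Uᵀ with hL
  have hLC : L * C = 1 := by
    rw [hL, hC, Matrix.mul_assoc, Matrix.fromRows_mul_fromCols]
    have h12 : Mᵀ * Sg⁻¹ * (Sg * U) = 0 := by
      rw [Matrix.mul_assoc, ← Matrix.mul_assoc Sg⁻¹, hSi, Matrix.one_mul, hMU]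
    rw [h12, hUM, ← Matrix.mul_assoc Uᵀ, ← hXdef, ← hYdef]
    rw [Matrix.fromBlocks_multiply]
    simp [hXi, hYi, Matrix.fromBlocks_one]
  have e : Fin K ⊕ Fin (p - K) ≃ Fin p :=
    finSumFinEquiv.trans (finCongr (by omega))
  have hCL : C * L = 1 := (Matrix.mul_eq_one_comm_of_equiv e).mp hLC
  -- the two projections agree on the columns of C
  set P : Matrix (Fin p) (Fin p) ℝ := 1 - M * X⁻¹ * Mᵀ * Sg⁻¹ with hP
  set Q : Matrix (Fin p) (Fin p) ℝ := Sg * U * Y⁻¹ * Uᵀ with hQ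
  have hSiU : Sg⁻¹ * (Sg * U) = U := by rw [← Matrix.mul_assoc, hSi, Matrix.one_mul]
  have hPM : P * M = 0 := by
    rw [hP, Matrix.sub_mul, Matrix.one_mul]
    simp only [Matrix.mul_assoc, hXi', Matrix.mul_one, sub_self]
  have hQM : Q * M = 0 := by
    rw [hQ]
    simp only [Matrix.mul_assoc, hUM]
    simp
  have hPS : P * (Sg * U) = Sg * U := by
    rw [hP, Matrix.sub_mul, Matrix.one_mul]
    simp only [Matrix.mul_assoc, hSiU, hMU]
    simp only [← Matrix.mul_assoc, hMU]
    simp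
  have hQS : Q * (Sg * U) = Sg * U := by
    rw [hQ]
    simp only [Matrix.mul_assoc, hYi', Matrix.mul_one]
  have hPC : (P - Q) * C = 0 := by
    rw [hC, Matrix.mul_fromCols]
    have h1 : (P - Q) * M = 0 := by rw [Matrix.sub_mul, hPM, hQM, sub_zero]
    have h2 : (P - Q) * (Sg * U) = 0 := by rw [Matrix.sub_mul, hPS, hQS, sub_self]
    rw [h1, h2]
    ext i j
    cases j <;> simp [Matrix.fromCols]
  have hPQ : P - Q = 0 := by
    calc P - Q = (P - Q) * (C * L) := by rw [hCL, Matrix.mul_one]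
    _ = ((P - Q) * C) * L := by rw [Matrix.mul_assoc]
    _ = 0 := by rw [hPC, Matrix.zero_mul]
  have := sub_eq_zero.mp hPQ
  rw [hP, hQ] at this
  exact this
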